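/- Let A be a type, let x and y be lists over the signed alphabet A × Bool, and let s be a signed letter. Any reduction sequence for the list x ++ [s, s⁻¹] ++ y can be transformed, by a finite chain of swap and overlap operations, into a reduction sequence whose first step deletes the adjacent inverse pair [s, s⁻¹] at position length(x). -/
import Mathlib


/-- The inverse of a signed letter `s = (a, b)` is `s⁻¹ = (a, !b)`. -/
def sinv {A : Type*} (s : A × Bool) : A × Bool := (s.1, !s.2)

/-- A single reduction step at recorded position `p`: it deletes the adjacent inverse
pair `[s, s⁻¹]` occurring after a prefix of length `p`. -/
def StepAt {A : Type*} (p : ℕ) (w v : List (A × Bool)) : Prop :=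
  ∃ (x y : List (A × Bool)) (s : A × Bool),
    x.length = p ∧ w = x ++ [s, sinv s] ++ y ∧ v = x ++ y

/-- `RedSeq w ps` : the list of positions `ps` is a reduction sequence for `w`, i.e. a
finite sequence of single reduction steps (each recording the position of the deleted
adjacent inverse pair) beginning at `w` and ending at the empty list. -/
inductive RedSeq {A : Type*} : List (A × Bool) → List ℕ → Prop
  | nil : RedSeq [] []
  | cons {p : ℕ} {w v : List (A × Bool)} {ps : List ℕ} :
      StepAt p w v → RedSeq v ps → RedSeq w (p :: ps)

/-- A single swap or overlap operation performed somewhere in a reduction sequence of the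
list in the first argument.
* `swap` exchanges two consecutive independent steps (the deleted pairs do not overlap),
  performing the two deletions in the opposite order;
* `overlap` replaces the step deleting the pair `a a⁻¹` in a list `x ++ [a, a⁻¹, a] ++ y`
  by the step deleting the pair `a⁻¹ a` at the next position (both yield `x ++ [a] ++ y`);
* `tail` applies the operation deeper in the sequence. -/
inductive TransfStep {A : Type*} : List (A × Bool) → List ℕ → List ℕ → Prop
  | swap (x : List (A × Bool)) (a : A × Bool) (y : List (A × Bool)) (b : A × Bool)
      (z : List (A × Bool)) (ps : List ℕ) :
      TransfStep (x ++ [a, sinv a] ++ y ++ [b, sinv b] ++ z)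
        ((x.length + 2 + y.length) :: x.length :: ps)
        (x.length :: (x.length + y.length) :: ps)
  | overlap (x : List (A × Bool)) (a : A × Bool) (y : List (A × Bool)) (ps : List ℕ) :
      TransfStep (x ++ [a, sinv a, a] ++ y) (x.length :: ps) ((x.length + 1) :: ps)
  | tail {p : ℕ} {w v : List (A × Bool)} {ps qs : List ℕ} :
      StepAt p w v → TransfStep v ps qs → TransfStep w (p :: ps) (p :: qs)

/-- `Transform w ps qs` : the reduction sequence `ps` for `w` can be transformed into the
reduction sequence `qs` by a finite chain of swap and overlap operations (each operation
may be used in either direction). -/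
def Transform {A : Type*} (w : List (A × Bool)) : List ℕ → List ℕ → Prop :=
  Relation.ReflTransGen (fun ps qs => TransfStep w ps qs ∨ TransfStep w qs ps)

lemma sinv_sinv {A : Type*} (s : A × Bool) : sinv (sinv s) = s := by
  simp [sinv]

lemma Transform.tail_lift {A : Type*} {p : ℕ} {w v : List (A × Bool)} {ps qs : List ℕ}
    (hs : StepAt p w v) (h : Transform v ps qs) : Transform w (p :: ps) (p :: qs) := by
  induction h with
  | refl => exact Relation.ReflTransGen.refl
  | tail _ h2 ih =>
      exact ih.tail (h2.elim (fun h' => Or.inl (TransfStep.tail hs h'))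
        (fun h' => Or.inr (TransfStep.tail hs h')))

lemma RedSeq.nil_inv {A : Type*} {w : List (A × Bool)} (h : RedSeq w []) : w = [] := by
  cases h; rfl

lemma RedSeq.cons_inv {A : Type*} {w : List (A × Bool)} {p : ℕ} {ps : List ℕ}
    (h : RedSeq w (p :: ps)) : ∃ v, StepAt p w v ∧ RedSeq v ps := by
  cases h with
  | cons hs hr => exact ⟨_, hs, hr⟩

lemma append_split {A : Type*} {a c : List A} {b d : List A}
    (h : a ++ b = c ++ d) (hle : a.length ≤ c.length) :
    ∃ m, c = a ++ m ∧ b = m ++ d := by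
  rcases List.append_eq_append_iff.mp h with ⟨m, hm1, hm2⟩ | ⟨m, hm1, hm2⟩
  · exact ⟨m, hm1, hm2⟩
  · have hm : m = [] := by
      have h' := congrArg List.length hm1
      simp at h'
      have : m.length = 0 := by omega
      exact List.length_eq_zero_iff.mp this
    subst hm
    exact ⟨[], by simpa using hm1.symm, by simpa using hm2.symm⟩

/-- Any reduction sequence for the list `x ++ [s, s⁻¹] ++ y` can be
transformed, by a finite chain of swap and overlap operations, into a reduction sequence
whose first step deletes the adjacent inverse pair `[s, s⁻¹]` at position `length x`
(and then continues with a reduction sequence for `x ++ y`). -/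
theorem transform_to_first_step {A : Type*} (x y : List (A × Bool)) (s : A × Bool)
    (ps : List ℕ) (h : RedSeq (x ++ [s, sinv s] ++ y) ps) :
    ∃ qs : List ℕ, Transform (x ++ [s, sinv s] ++ y) ps (x.length :: qs) ∧
      RedSeq (x ++ y) qs := by
  induction ps generalizing x y s with
  | nil =>
      exfalso
      have hw := h.nil_inv
      simp at hw
  | cons p ps' ih =>
      obtain ⟨v, hstep, hrest⟩ := h.cons_inv
      obtain ⟨x', y', s', hlen, hw, hv⟩ := hstep
      rcases Nat.lt_trichotomy p x.length with hp | hp | hp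
      · -- first deletion strictly left of the pair
        have hle : x'.length ≤ x.length := by omega
        have hw' : x' ++ ([s', sinv s'] ++ y') = x ++ ([s, sinv s] ++ y) := by
          simpa [List.append_assoc] using hw.symm
        obtain ⟨m, hm1, hm2⟩ := append_split hw' hle
        have hmlen : x'.length + m.length = x.length := by
          have := congrArg List.length hm1; simp at this; omega
        match m, hm2 with
        | [u], hm2 =>
          -- overlap on the left: p + 1 = x.length
          have hs' : s' = u ∧ sinv s' = s ∧ y' = sinv s :: y := by
            simpa using hm2
          obtain ⟨hu, hss, hy'⟩ := hs'
          have hseq : s' = sinv s := by rw [← hss, sinv_sinv]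
          subst hseq
          subst hu
          have hx : x = x' ++ [sinv s] := by simpa using hm1
          have hweq : x ++ [s, sinv s] ++ y = x' ++ [sinv s, sinv (sinv s), sinv s] ++ y := by
            rw [hx, sinv_sinv]; simp
          refine ⟨ps', ?_, ?_⟩
          · have hstep1 : TransfStep (x ++ [s, sinv s] ++ y) (x'.length :: ps')
                ((x'.length + 1) :: ps') := by
              rw [hweq]; exact TransfStep.overlap x' (sinv s) y ps'
            have hpl : p = x'.length := hlen.symm
            have hxl : x.length = x'.length + 1 := by rw [hx]; simp
            rw [hpl, hxl]
            exact Relation.ReflTransGen.single (Or.inl hstep1)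
          · have hveq : v = x' ++ sinv s :: y := by rw [hv, hy']
            have : x ++ y = x' ++ sinv s :: y := by rw [hx]; simp
            rw [this, ← hveq]
            exact hrest
        | u :: t :: m2, hm2 =>
          -- disjoint, deletion inside x
          have hs' : s' = u ∧ sinv s' = t ∧ y' = m2 ++ ([s, sinv s] ++ y) := by
            simpa using hm2
          obtain ⟨rfl, ht, rfl⟩ := hs'
          subst ht
          have hx : x = x' ++ [s', sinv s'] ++ m2 := by
            rw [hm1]; simp
          have hveq : v = (x' ++ m2) ++ [s, sinv s] ++ y := by
            rw [hv]; simp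
          obtain ⟨qs', hT, hR⟩ := ih (x' ++ m2) y s (by rw [← hveq]; exact hrest)
          refine ⟨p :: qs', ?_, ?_⟩
          · have h1 : Transform (x ++ [s, sinv s] ++ y) (p :: ps')
                (p :: (x' ++ m2).length :: qs') :=
              Transform.tail_lift ⟨x', _, s', hlen, hw, hv⟩ (by rw [hveq]; exact hT)
            have hswap : TransfStep (x ++ [s, sinv s] ++ y)
                ((x'.length + 2 + m2.length) :: x'.length :: qs')
                (x'.length :: (x'.length + m2.length) :: qs') := by
              have := TransfStep.swap x' s' m2 s y qs'
              have hw2 : x ++ [s, sinv s] ++ y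
                  = x' ++ [s', sinv s'] ++ m2 ++ [s, sinv s] ++ y := by
                rw [hx]
              rw [hw2]; exact this
            have hpl : p = x'.length := hlen.symm
            have hxl : x.length = x'.length + 2 + m2.length := by rw [hx]; simp; omega
            have hml : (x' ++ m2).length = x'.length + m2.length := by simp
            rw [hxl, hpl]
            rw [hpl, hml] at h1
            exact h1.tail (Or.inr hswap)
          · refine RedSeq.cons (v := x' ++ (m2 ++ y))
              ⟨x', m2 ++ y, s', hlen, ?_, rfl⟩ ?_
            · rw [hx]; simp
            · have : x' ++ (m2 ++ y) = x' ++ m2 ++ y := by simp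
              rw [this]; exact hR
        | [], hm2 => exact absurd hmlen (by simp; omega)
      · -- first deletion is exactly the pair
        have hle : x.length ≤ x'.length := by omega
        have hw' : x ++ ([s, sinv s] ++ y) = x' ++ ([s', sinv s'] ++ y') := by
          simpa [List.append_assoc] using hw
        obtain ⟨m, hm1, hm2⟩ := append_split hw' hle
        have hm : m = [] := by
          have h' := congrArg List.length hm1
          simp at h'
          have : m.length = 0 := by omega
          exact List.length_eq_zero_iff.mp this
        subst hm
        have hx : x' = x := by simpa using hm1
        subst hx
        have hs : s = s' ∧ sinv s = sinv s' ∧ y = y' := by simpa using hm2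
        obtain ⟨rfl, -, rfl⟩ := hs
        refine ⟨ps', ?_, ?_⟩
        · rw [← hlen]; exact Relation.ReflTransGen.refl
        · rw [← hv]; exact hrest
      · -- first deletion strictly right of the pair
        have hle : x.length ≤ x'.length := by omega
        have hw' : x ++ ([s, sinv s] ++ y) = x' ++ ([s', sinv s'] ++ y') := by
          simpa [List.append_assoc] using hw
        obtain ⟨m, hm1, hm2⟩ := append_split hw' hle
        have hmlen : x.length + m.length = x'.length := by
          have := congrArg List.length hm1; simp at this; omega
        match m, hm2 with
        | [u], hm2 =>
          -- overlap on the right: p = x.length + 1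
          have hs' : s = u ∧ sinv s = s' ∧ y = sinv s' :: y' := by
            simpa using hm2
          obtain ⟨rfl, hss, hy⟩ := hs'
          have hy2 : y = s :: y' := by rw [hy, ← hss, sinv_sinv]
          refine ⟨ps', ?_, ?_⟩
          · have hweq : x ++ [s, sinv s] ++ y = x ++ [s, sinv s, s] ++ y' := by
              rw [hy2]; simp
            have hstep1 : TransfStep (x ++ [s, sinv s] ++ y) (x.length :: ps')
                ((x.length + 1) :: ps') := by
              rw [hweq]; exact TransfStep.overlap x s y' ps'
            have hpl : p = x.length + 1 := by simp at hmlen; omega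
            rw [hpl]
            exact Relation.ReflTransGen.single (Or.inr hstep1)
          · have : x ++ y = x' ++ y' := by rw [hy2, hm1]; simp
            rw [this, ← hv]; exact hrest
        | u :: t :: m2, hm2 =>
          -- disjoint, deletion inside y
          have hs' : s = u ∧ sinv s = t ∧ y = m2 ++ ([s', sinv s'] ++ y') := by
            simpa using hm2
          obtain ⟨rfl, ht, hy⟩ := hs'
          subst ht
          have hx' : x' = x ++ [s, sinv s] ++ m2 := by rw [hm1]; simp
          have hveq : v = x ++ [s, sinv s] ++ (m2 ++ y') := by
            rw [hv, hx']; simp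
          obtain ⟨qs', hT, hR⟩ := ih x (m2 ++ y') s (by rw [← hveq]; exact hrest)
          refine ⟨(x.length + m2.length) :: qs', ?_, ?_⟩
          · have h1 : Transform (x ++ [s, sinv s] ++ y) (p :: ps')
                (p :: x.length :: qs') :=
              Transform.tail_lift ⟨x', _, s', hlen, hw, hv⟩ (by rw [hveq]; exact hT)
            have hswap : TransfStep (x ++ [s, sinv s] ++ y)
                ((x.length + 2 + m2.length) :: x.length :: qs')
                (x.length :: (x.length + m2.length) :: qs') := by
              have := TransfStep.swap x s m2 s' y' qs'
              have hw2 : x ++ [s, sinv s] ++ y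
                  = x ++ [s, sinv s] ++ m2 ++ [s', sinv s'] ++ y' := by
                rw [hy]; simp
              rw [hw2]; exact this
            have hpl : p = x.length + 2 + m2.length := by
              have := congrArg List.length hx'; simp at this; omega
            rw [hpl] at h1 ⊢
            exact h1.tail (Or.inl hswap)
          · refine RedSeq.cons (v := (x ++ m2) ++ y')
              ⟨x ++ m2, y', s', ?_, ?_, rfl⟩ ?_
            · simp
            · rw [hy]; simp
            · have : x ++ m2 ++ y' = x ++ (m2 ++ y') := by simp
              rw [this]; exact hR
        | [], hm2 =>
          exfalso
          simp at hmlen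
          omega
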